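/- Let K be a number field, θ ∈ Z_K, ν ≥ 1 an integer, and ζ ∈ μ(K) a root of unity, and assume θ/ν is not a root of unity. If p is a prime number and k ≥ 1 an integer such that θ^k − ζ·ν^k ∈ p Z_K, then max_σ |σ(θ)|^k + ν^k ≥ p, where σ runs over the embeddings of K into ℂ. -/

import Mathlib

open NumberField Polynomial

/-- `x ≡ y (mod I)` for `x : K`, `y : 𝓞 K`: `x` can be written as a fraction `a/b`
with `b` invertible mod `I` and `a ≡ y·b (mod I)`. -/
def CongMod (K : Type) [Field K] [NumberField K] (I : Ideal (𝓞 K)) (x : K) (y : 𝓞 K) : Prop :=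
  ∃ a b : 𝓞 K, IsUnit (Ideal.Quotient.mk I b) ∧
    algebraMap (𝓞 K) K a = x * algebraMap (𝓞 K) K b ∧
    Ideal.Quotient.mk I a = Ideal.Quotient.mk I (y * b)

/-- `η ∈ K^×` is a unit at every prime of `K` above `p`:
it is a quotient of two integers of `K` that are invertible modulo `p`. -/
def PrimeTo (K : Type) [Field K] [NumberField K] (p : ℕ) (η : K) : Prop :=
  ∃ a b : 𝓞 K,
    IsUnit (Ideal.Quotient.mk (Ideal.span {(p : 𝓞 K)}) a) ∧
    IsUnit (Ideal.Quotient.mk (Ideal.span {(p : 𝓞 K)}) b) ∧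
    algebraMap (𝓞 K) K a = η * algebraMap (𝓞 K) K b

/-- The set of integers `k ≥ 1` with `η^k ≡ 1 (mod I)`; its least element
is the order of `η` modulo `I`. -/
def OrderSet (K : Type) [Field K] [NumberField K] (I : Ideal (𝓞 K)) (η : K) : Set ℕ :=
  {k : ℕ | 0 < k ∧ CongMod K I (η ^ k) 1}

/-- `s` is the Frobenius of `𝔭` over `p`: `s x ≡ x^p (mod 𝔭)` for every integer `x` of `K`. -/
def IsFrob (K : Type) [Field K] [NumberField K] (p : ℕ)
    (𝔭 : Ideal (𝓞 K)) (s : K ≃ₐ[ℚ] K) : Prop :=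
  ∀ x : 𝓞 K, galRestrict ℤ ℚ K (𝓞 K) s x - x ^ p ∈ 𝔭

/-- if `θ^k - ζ·ν^k ∈ p Z_K` with `θ/ν` not a root of unity, then
`max_σ |σ(θ)|^k + ν^k ≥ p`. -/
theorem statement_12
    (K : Type) [Field K] [NumberField K]
    (θ : 𝓞 K) (ν : ℕ) (hν : 1 ≤ ν)
    (ζ : 𝓞 K) (hζ : ∃ m : ℕ, 0 < m ∧ ζ ^ m = 1)
    (hroot : ¬ ∃ m : ℕ, 0 < m ∧ (algebraMap (𝓞 K) K θ / (ν : K)) ^ m = 1)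
    (p : ℕ) (hp : p.Prime) (k : ℕ) (hk : 1 ≤ k)
    (hcong : θ ^ k - ζ * (ν : 𝓞 K) ^ k ∈ Ideal.span {(p : 𝓞 K)}) :
    (p : ℝ) ≤ (⨆ σ : K →+* ℂ, ‖σ (algebraMap (𝓞 K) K θ)‖) ^ k + (ν : ℝ) ^ k := by
  classical
  obtain ⟨m, hm, hζm⟩ := hζ
  set S : ℝ := ⨆ σ : K →+* ℂ, ‖σ (algebraMap (𝓞 K) K θ)‖ with hSdef
  have hνK : (ν : K) ≠ 0 := Nat.cast_ne_zero.mpr (by omega)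
  set α : 𝓞 K := θ ^ k - ζ * (ν : 𝓞 K) ^ k with hαdef
  -- α ≠ 0
  have hα0 : α ≠ 0 := by
    intro h
    apply hroot
    refine ⟨k * m, by positivity, ?_⟩
    have hθk : (algebraMap (𝓞 K) K θ) ^ k
        = algebraMap (𝓞 K) K ζ * (ν : K) ^ k := by
      have : θ ^ k = ζ * (ν : 𝓞 K) ^ k := by
        have := sub_eq_zero.mp h; exact this
      calc (algebraMap (𝓞 K) K θ) ^ k = algebraMap (𝓞 K) K (θ ^ k) := by
            rw [map_pow]
        _ = algebraMap (𝓞 K) K (ζ * (ν : 𝓞 K) ^ k) := by rw [this]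
        _ = algebraMap (𝓞 K) K ζ * (ν : K) ^ k := by push_cast; ring
    have hζK : (algebraMap (𝓞 K) K ζ) ^ m = 1 := by
      rw [← map_pow, hζm, map_one]
    rw [pow_mul, div_pow, hθk, mul_div_assoc, div_self (pow_ne_zero _ hνK), mul_one, hζK]
  obtain ⟨β, hβ⟩ := Ideal.mem_span_singleton.mp hcong
  have hβ0 : β ≠ 0 := by
    rintro rfl; rw [mul_zero] at hβ; exact hα0 hβ
  set n := Module.finrank ℚ K with hn
  have hn1 : 0 < n := Module.finrank_pos
  set αK : K := algebraMap (𝓞 K) K α with hαK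
  set βK : K := algebraMap (𝓞 K) K β with hβK
  -- S is an upper bound for |σ θ| and is nonnegative
  have hbdd : BddAbove (Set.range fun σ : K →+* ℂ => ‖σ (algebraMap (𝓞 K) K θ)‖) :=
    Set.Finite.bddAbove (Set.finite_range _)
  have hSle : ∀ σ : K →+* ℂ, ‖σ (algebraMap (𝓞 K) K θ)‖ ≤ S :=
    fun σ => le_ciSup hbdd σ
  have hS0 : 0 ≤ S := le_trans (norm_nonneg _)
    (hSle (Classical.arbitrary (K →+* ℂ)))
  -- bound each embedding of α
  have hbound : ∀ σ : K →ₐ[ℚ] ℂ, ‖σ αK‖ ≤ S ^ k + (ν : ℝ) ^ k := by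
    intro σ
    have habs1 : ‖σ (algebraMap (𝓞 K) K ζ)‖ = 1 := by
      have h1 : ‖σ (algebraMap (𝓞 K) K ζ)‖ ^ m = 1 := by
        rw [← norm_pow, ← map_pow, ← map_pow, hζm, map_one, map_one, norm_one]
      have h2 := norm_nonneg (σ (algebraMap (𝓞 K) K ζ))
      rcases (pow_eq_one_iff_cases (n := m)).mp h1 with h | h | h
      · omega
      · exact h
      · linarith [h.1]
    have hσα : σ αK = σ ((algebraMap (𝓞 K) K θ)) ^ k
        - σ (algebraMap (𝓞 K) K ζ) * (ν : ℂ) ^ k := by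
      rw [hαK, hαdef]
      push_cast
      rw [map_sub, map_pow, map_mul, map_pow, map_natCast]
    rw [hσα]
    calc ‖σ (algebraMap (𝓞 K) K θ) ^ k
          - σ (algebraMap (𝓞 K) K ζ) * (ν : ℂ) ^ k‖
        ≤ ‖σ (algebraMap (𝓞 K) K θ) ^ k‖
          + ‖σ (algebraMap (𝓞 K) K ζ) * (ν : ℂ) ^ k‖ := by
          exact norm_sub_le _ _
      _ = ‖σ.toRingHom (algebraMap (𝓞 K) K θ)‖ ^ k + (ν : ℝ) ^ k := by
          rw [norm_pow, norm_mul, habs1, one_mul, norm_pow, Complex.norm_natCast]; rfl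
      _ ≤ S ^ k + (ν : ℝ) ^ k := by
          gcongr <;>
            first
              | exact norm_nonneg _
              | exact hSle σ.toRingHom
  -- product = |norm|
  have hnormprod : ‖algebraMap ℚ ℂ (Algebra.norm ℚ αK)‖
      = ∏ σ : K →ₐ[ℚ] ℂ, ‖σ αK‖ := by
    rw [Algebra.norm_eq_prod_embeddings ℚ ℂ αK, norm_prod]
  -- lower bound on the norm
  have hnormβ : (1 : ℝ) ≤ |(Algebra.norm ℚ βK : ℝ)| := by
    have hne : Algebra.norm ℚ βK ≠ 0 :=
      Algebra.norm_ne_zero_iff.mpr (by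
        simpa [hβK] using (RingOfIntegers.coe_ne_zero_iff).mpr hβ0)
    have hint : ((Algebra.norm ℤ β : ℤ) : ℚ) = Algebra.norm ℚ βK := Algebra.coe_norm_int β
    have hz : Algebra.norm ℤ β ≠ 0 := by
      intro h; apply hne; rw [← hint, h]; norm_num
    have : (1 : ℤ) ≤ |Algebra.norm ℤ β| := Int.one_le_abs (by omega)
    calc (1 : ℝ) ≤ |(Algebra.norm ℤ β : ℝ)| := by
          rw [← Int.cast_abs]; exact_mod_cast this
      _ = |(Algebra.norm ℚ βK : ℝ)| := by
          rw [← hint]; push_cast; ring_nf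
  have hαKfact : αK = algebraMap ℚ K (p : ℚ) * βK := by
    rw [hαK, hβ, map_mul]
    congr 1
    simp [map_natCast]
  have hnormα : ((p : ℝ)) ^ n ≤ |(Algebra.norm ℚ αK : ℝ)| := by
    rw [hαKfact, map_mul, Algebra.norm_algebraMap]
    push_cast
    rw [abs_mul, abs_pow, abs_of_nonneg (by positivity : (0:ℝ) ≤ (p:ℝ))]
    nlinarith [pow_pos (by exact_mod_cast hp.pos : (0:ℝ) < (p:ℝ)) n,
      pow_nonneg (by positivity : (0:ℝ) ≤ (p:ℝ)) n, hnormβ,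
      abs_nonneg ((Algebra.norm ℚ βK : ℝ))]
  -- |norm| as the complex abs
  have habsnorm : ‖algebraMap ℚ ℂ (Algebra.norm ℚ αK)‖
      = |(Algebra.norm ℚ αK : ℝ)| := by
    rw [show algebraMap ℚ ℂ (Algebra.norm ℚ αK) = ((Algebra.norm ℚ αK : ℝ) : ℂ) by
      push_cast; simp [Complex.ofReal_ratCast], Complex.norm_real, Real.norm_eq_abs]
  -- upper bound on the product
  have hcard : Fintype.card (K →ₐ[ℚ] ℂ) = n := AlgHom.card ℚ K ℂ
  have hprod_le : ∏ σ : K →ₐ[ℚ] ℂ, ‖σ αK‖ ≤ (S ^ k + (ν : ℝ) ^ k) ^ n := by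
    calc ∏ σ : K →ₐ[ℚ] ℂ, ‖σ αK‖
        ≤ ∏ _σ : K →ₐ[ℚ] ℂ, (S ^ k + (ν : ℝ) ^ k) :=
          Finset.prod_le_prod (fun σ _ => norm_nonneg _) (fun σ _ => hbound σ)
      _ = (S ^ k + (ν : ℝ) ^ k) ^ n := by
          rw [Finset.prod_const, Finset.card_univ, hcard]
  -- conclude
  have key : ((p : ℝ)) ^ n ≤ (S ^ k + (ν : ℝ) ^ k) ^ n := by
    calc ((p : ℝ)) ^ n ≤ |(Algebra.norm ℚ αK : ℝ)| := hnormα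
      _ = ∏ σ : K →ₐ[ℚ] ℂ, ‖σ αK‖ := by rw [← habsnorm, hnormprod]
      _ ≤ (S ^ k + (ν : ℝ) ^ k) ^ n := hprod_le
  have hpn : (p : ℝ) ≤ S ^ k + (ν : ℝ) ^ k :=
    le_of_pow_le_pow_left₀ (by omega) (by positivity) key
  exact hpn
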